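/- For the logistic loss φ(z) = log₂(1+e^{−z}), the optimal generic conditional φ-risk is C*(η) = −η·log₂η − (1−η)·log₂(1−η) for η ∈ (0,1). -/

import Mathlib

theorem stmt6 :
    ∀ η ∈ Set.Ioo (0:ℝ) 1,
      (⨅ z : ℝ, η * Real.logb 2 (1 + Real.exp (-z)) +
        (1 - η) * Real.logb 2 (1 + Real.exp z)) =
      -η * Real.logb 2 η - (1 - η) * Real.logb 2 (1 - η) := by
  intro η hη
  obtain ⟨hη0, hη1⟩ := hη
  have h1η : (0:ℝ) < 1 - η := by linarith
  have hlog2 : (0:ℝ) < Real.log 2 := Real.log_pos (by norm_num)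
  have key : ∀ z : ℝ, -η * Real.logb 2 η - (1 - η) * Real.logb 2 (1 - η) ≤
      η * Real.logb 2 (1 + Real.exp (-z)) + (1 - η) * Real.logb 2 (1 + Real.exp z) := by
    intro z
    have hez : (0:ℝ) < Real.exp z := Real.exp_pos z
    have hez' : (0:ℝ) < Real.exp (-z) := Real.exp_pos (-z)
    have he1 : (0:ℝ) < 1 + Real.exp (-z) := by positivity
    have he2 : (0:ℝ) < 1 + Real.exp z := by positivity
    have ha : (0:ℝ) < η * (1 + Real.exp (-z)) := by positivity
    have hb : (0:ℝ) < (1 - η) * (1 + Real.exp z) := by positivity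
    have g1 : 1 - 1 / (η * (1 + Real.exp (-z))) ≤ Real.log (η * (1 + Real.exp (-z))) := by
      have h := Real.log_le_sub_one_of_pos (show (0:ℝ) < 1 / (η * (1 + Real.exp (-z))) by positivity)
      rw [Real.log_div one_ne_zero (ne_of_gt ha), Real.log_one] at h
      linarith
    have g2 : 1 - 1 / ((1 - η) * (1 + Real.exp z)) ≤ Real.log ((1 - η) * (1 + Real.exp z)) := by
      have h := Real.log_le_sub_one_of_pos (show (0:ℝ) < 1 / ((1 - η) * (1 + Real.exp z)) by positivity)
      rw [Real.log_div one_ne_zero (ne_of_gt hb), Real.log_one] at h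
      linarith
    have hsum : 1 / (1 + Real.exp (-z)) + 1 / (1 + Real.exp z) = 1 := by
      rw [Real.exp_neg]
      field_simp
      ring
    have hfa : η * (1 / (η * (1 + Real.exp (-z)))) = 1 / (1 + Real.exp (-z)) := by
      field_simp
    have hfb : (1 - η) * (1 / ((1 - η) * (1 + Real.exp z))) = 1 / (1 + Real.exp z) := by
      field_simp
    have hla : Real.log (η * (1 + Real.exp (-z))) = Real.log η + Real.log (1 + Real.exp (-z)) :=
      Real.log_mul (ne_of_gt hη0) (ne_of_gt he1)
    have hlb : Real.log ((1 - η) * (1 + Real.exp z)) = Real.log (1 - η) + Real.log (1 + Real.exp z) :=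
      Real.log_mul (ne_of_gt h1η) (ne_of_gt he2)
    have hnat : -η * Real.log η - (1 - η) * Real.log (1 - η) ≤
        η * Real.log (1 + Real.exp (-z)) + (1 - η) * Real.log (1 + Real.exp z) := by
      have e1 : η * (1 - 1 / (η * (1 + Real.exp (-z)))) ≤ η * Real.log (η * (1 + Real.exp (-z))) :=
        mul_le_mul_of_nonneg_left g1 (le_of_lt hη0)
      have e2 : (1 - η) * (1 - 1 / ((1 - η) * (1 + Real.exp z))) ≤
          (1 - η) * Real.log ((1 - η) * (1 + Real.exp z)) :=
        mul_le_mul_of_nonneg_left g2 (le_of_lt h1η)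
      rw [hla] at e1
      rw [hlb] at e2
      nlinarith [e1, e2, hsum, hfa, hfb]
    simp only [Real.logb]
    rw [← mul_div_assoc, ← mul_div_assoc, ← mul_div_assoc, ← mul_div_assoc, ← sub_div, ← add_div]
    gcongr
  have hbdd : BddBelow (Set.range fun z : ℝ =>
      η * Real.logb 2 (1 + Real.exp (-z)) + (1 - η) * Real.logb 2 (1 + Real.exp z)) := by
    refine ⟨-η * Real.logb 2 η - (1 - η) * Real.logb 2 (1 - η), ?_⟩
    rintro _ ⟨z, rfl⟩
    exact key z
  apply le_antisymm
  · -- infimum ≤ value at z₀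
    have hratio : (0:ℝ) < η / (1 - η) := by positivity
    have hle := ciInf_le hbdd (Real.log (η / (1 - η)))
    have hexp : Real.exp (Real.log (η / (1 - η))) = η / (1 - η) := Real.exp_log hratio
    have hexp' : Real.exp (-Real.log (η / (1 - η))) = (1 - η) / η := by
      rw [Real.exp_neg, hexp]
      rw [inv_div]
    have hv1 : 1 + Real.exp (-Real.log (η / (1 - η))) = 1 / η := by
      rw [hexp']
      field_simp
      ring
    have hv2 : 1 + Real.exp (Real.log (η / (1 - η))) = 1 / (1 - η) := by
      rw [hexp]
      field_simp
      ring
    rw [hv1, hv2] at hle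
    have l1 : Real.logb 2 (1 / η) = -Real.logb 2 η := by
      rw [one_div, Real.logb_inv]
    have l2 : Real.logb 2 (1 / (1 - η)) = -Real.logb 2 (1 - η) := by
      rw [one_div, Real.logb_inv]
    rw [l1, l2] at hle
    calc (⨅ z : ℝ, η * Real.logb 2 (1 + Real.exp (-z)) +
        (1 - η) * Real.logb 2 (1 + Real.exp z)) ≤ η * -Real.logb 2 η + (1 - η) * -Real.logb 2 (1 - η) := hle
      _ = -η * Real.logb 2 η - (1 - η) * Real.logb 2 (1 - η) := by ring
  · exact le_ciInf key
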